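/- Let X be a right A-Galois object. Then: (i) α(δ_X) = δ_X ⊗ δ, where δ is the modular element of A; (ii) β(δ) = δ_X⁻¹ ⊗ δ_X; (iii) σ_X(δ_X) = τ⁻¹·δ_X, where τ is the scaling constant of A. -/

import Mathlib

open TensorProduct

noncomputable section

variable (k : Type*) [Field k]

/-- Apply a linear functional to the second tensor factor. -/
def applySnd {M N : Type*} [AddCommGroup M] [Module k M]
    [AddCommGroup N] [Module k N] (f : N →ₗ[k] k) : M ⊗[k] N →ₗ[k] M :=
  (TensorProduct.rid k M).toLinearMap ∘ₗ LinearMap.lTensor M f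

/-- Apply a linear functional to the first tensor factor. -/
def applyFst {M N : Type*} [AddCommGroup M] [Module k M]
    [AddCommGroup N] [Module k N] (f : M →ₗ[k] k) : M ⊗[k] N →ₗ[k] N :=
  (TensorProduct.lid k N).toLinearMap ∘ₗ LinearMap.rTensor N f

variable (A X : Type*) [Ring A] [HopfAlgebra k A] [Ring X] [Algebra k X]

/-- The Galois map `V : X ⊗ X → X ⊗ A`, `x ⊗ y ↦ (x ⊗ 1) * α y`. -/
def galoisV (α : X →ₐ[k] X ⊗[k] A) : X ⊗[k] X →ₗ[k] X ⊗[k] A :=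
  LinearMap.mul' k (X ⊗[k] A) ∘ₗ
    TensorProduct.map ((TensorProduct.mk k X A).flip 1) α.toLinearMap

/-- A Hopf algebra with bijective antipode and faithful left integral `φ`,
together with a right Galois coaction `α` on `X` with trivial coinvariants. -/
structure GaloisContext where
  φ : A →ₗ[k] k
  φ_ne : φ ≠ 0
  φ_integral : ∀ a : A, applySnd k φ (Coalgebra.comul a) = φ a • (1 : A)
  φ_faithful_left : ∀ a : A, (∀ b : A, φ (a * b) = 0) → a = 0
  φ_faithful_right : ∀ a : A, (∀ b : A, φ (b * a) = 0) → a = 0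
  antipode_bijective : Function.Bijective (HopfAlgebra.antipode (R := k) (A := A))
  α : X →ₐ[k] X ⊗[k] A
  coassoc : ∀ x : X,
    TensorProduct.assoc k X A A ((LinearMap.rTensor A α.toLinearMap) (α x))
      = LinearMap.lTensor X (Coalgebra.comul (R := k) (A := A)) (α x)
  counit_id : ∀ x : X,
    applySnd k (Coalgebra.counit (R := k) (A := A)) (α x) = x
  coinv_trivial : ∀ x : X, α x = x ⊗ₜ[k] (1 : A) → ∃ c : k, x = c • (1 : X)
  galois : Function.Bijective (galoisV k A X α)

variable {k A X}

/-- The Galois map as a linear equivalence. -/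
def GaloisContext.V (G : GaloisContext k A X) : (X ⊗[k] X) ≃ₗ[k] (X ⊗[k] A) :=
  LinearEquiv.ofBijective (galoisV k A X G.α) G.galois

/-- The map `β : A → X ⊗ X`, `a ↦ V⁻¹(1 ⊗ a)`. -/
def GaloisContext.β (G : GaloisContext k A X) : A →ₗ[k] X ⊗[k] X :=
  G.V.symm.toLinearMap ∘ₗ TensorProduct.mk k X A 1

end
noncomputable section GOGeneric

variable {k : Type*} [Field k]

section Generic

variable {M N : Type*} [AddCommGroup M] [Module k M] [AddCommGroup N] [Module k N]

@[simp] lemma GO.applySnd_tmul (f : N →ₗ[k] k) (m : M) (n : N) :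
    applySnd k f (m ⊗ₜ[k] n) = f n • m := by
  simp [applySnd]

@[simp] lemma GO.applyFst_tmul (f : M →ₗ[k] k) (m : M) (n : N) :
    applyFst k f (m ⊗ₜ[k] n) = f m • n := by
  simp [applyFst]

lemma GO.swap_apply (f : M →ₗ[k] k) (g : N →ₗ[k] k) (w : M ⊗[k] N) :
    g (applyFst k f w) = f (applySnd k g w) := by
  induction w using TensorProduct.induction_on with
  | zero => simp
  | tmul m n => simp [mul_comm]
  | add x y hx hy => simp [map_add, hx, hy]

lemma GO.applySnd_smul {M N : Type*} [AddCommGroup M] [Module k M] [AddCommGroup N]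
    [Module k N] (c : k) (f : N →ₗ[k] k) (w : M ⊗[k] N) :
    applySnd k (c • f) w = c • applySnd k f w := by
  induction w using TensorProduct.induction_on with
  | zero => simp
  | tmul m n => simp [mul_smul]
  | add x y hx hy => simp [map_add, hx, hy, smul_add]

lemma GO.applySnd_lTensor (f : N →ₗ[k] k) (g : N →ₗ[k] N) (w : M ⊗[k] N) :
    applySnd k f (LinearMap.lTensor M g w) = applySnd k (f ∘ₗ g) w := by
  induction w using TensorProduct.induction_on with
  | zero => simp
  | tmul m n => simp
  | add x y hx hy => simp [map_add, hx, hy]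

/-- separation lemma: if all right-coordinates (w.r.t. a basis of `N`) vanish, the tensor is 0. -/
lemma GO.sep_right {ι : Type*} (𝒞 : Module.Basis ι k N) (w : M ⊗[k] N)
    (h : ∀ j, applySnd k (𝒞.coord j) w = 0) : w = 0 := by
  classical
  apply (TensorProduct.equivFinsuppOfBasisRight 𝒞).injective
  rw [map_zero]
  ext j
  have key : ∀ w : M ⊗[k] N, (TensorProduct.equivFinsuppOfBasisRight 𝒞) w j
      = applySnd k (𝒞.coord j) w := by
    intro w
    induction w using TensorProduct.induction_on with
    | zero => simp
    | tmul m n => simp [TensorProduct.equivFinsuppOfBasisRight_apply_tmul_apply, Module.Basis.coord_apply]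
    | add x y hx hy => simp [map_add, hx, hy]
  simp [key, h]

lemma GO.sep_left {ι : Type*} (ℬ : Module.Basis ι k M) (w : M ⊗[k] N)
    (h : ∀ i, applyFst k (ℬ.coord i) w = 0) : w = 0 := by
  classical
  apply (TensorProduct.equivFinsuppOfBasisLeft ℬ).injective
  rw [map_zero]
  ext i
  have key : ∀ w : M ⊗[k] N, (TensorProduct.equivFinsuppOfBasisLeft ℬ) w i
      = applyFst k (ℬ.coord i) w := by
    intro w
    induction w using TensorProduct.induction_on with
    | zero => simp
    | tmul m n => simp [TensorProduct.equivFinsuppOfBasisLeft_apply_tmul_apply, Module.Basis.coord_apply]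
    | add x y hx hy => simp [map_add, hx, hy]
  simp [key, h]

end Generic

end GOGeneric

noncomputable section GOMul
variable {k : Type*} [Field k]
section MulLemmas
variable {B C : Type*} [Ring B] [Algebra k B] [Ring C] [Algebra k C]

lemma GO.applySnd_mul_tmul_one_left (f : C →ₗ[k] k) (b : B) (w : B ⊗[k] C) :
    applySnd k f ((b ⊗ₜ[k] (1 : C)) * w) = b * applySnd k f w := by
  induction w using TensorProduct.induction_on with
  | zero => simp
  | tmul u v => simp [Algebra.TensorProduct.tmul_mul_tmul, mul_smul_comm]
  | add x y hx hy => simp [mul_add, map_add, hx, hy]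

lemma GO.applySnd_mul_tmul_one_right (f : C →ₗ[k] k) (b : B) (w : B ⊗[k] C) :
    applySnd k f (w * (b ⊗ₜ[k] (1 : C))) = applySnd k f w * b := by
  induction w using TensorProduct.induction_on with
  | zero => simp
  | tmul u v => simp [Algebra.TensorProduct.tmul_mul_tmul, smul_mul_assoc]
  | add x y hx hy => simp [add_mul, map_add, hx, hy]

lemma GO.applySnd_mul_one_tmul_left (f : C →ₗ[k] k) (c : C) (w : B ⊗[k] C) :
    applySnd k f (((1 : B) ⊗ₜ[k] c) * w) = applySnd k (f ∘ₗ LinearMap.mulLeft k c) w := by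
  induction w using TensorProduct.induction_on with
  | zero => simp
  | tmul u v => simp [Algebra.TensorProduct.tmul_mul_tmul]
  | add x y hx hy => simp [mul_add, map_add, hx, hy]

lemma GO.applySnd_mul_one_tmul_right (f : C →ₗ[k] k) (c : C) (w : B ⊗[k] C) :
    applySnd k f (w * ((1 : B) ⊗ₜ[k] c)) = applySnd k (f ∘ₗ LinearMap.mulRight k c) w := by
  induction w using TensorProduct.induction_on with
  | zero => simp
  | tmul u v => simp [Algebra.TensorProduct.tmul_mul_tmul]
  | add x y hx hy => simp [add_mul, map_add, hx, hy]

lemma GO.applyFst_mul_one_tmul_left (f : B →ₗ[k] k) (c : C) (w : B ⊗[k] C) :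
    applyFst k f (((1 : B) ⊗ₜ[k] c) * w) = c * applyFst k f w := by
  induction w using TensorProduct.induction_on with
  | zero => simp
  | tmul u v => simp [Algebra.TensorProduct.tmul_mul_tmul, mul_smul_comm]
  | add x y hx hy => simp [mul_add, map_add, hx, hy]

lemma GO.applyFst_mul_tmul_one_left (f : B →ₗ[k] k) (b : B) (w : B ⊗[k] C) :
    applyFst k f ((b ⊗ₜ[k] (1 : C)) * w) = applyFst k (f ∘ₗ LinearMap.mulLeft k b) w := by
  induction w using TensorProduct.induction_on with
  | zero => simp
  | tmul u v => simp [Algebra.TensorProduct.tmul_mul_tmul]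
  | add x y hx hy => simp [mul_add, map_add, hx, hy]

/-- `applyFst f (w * (y ⊗ c)) = (applyFst (f ∘ mulRight y) w) * c`. -/
lemma GO.applyFst_mul_tmul_right (f : B →ₗ[k] k) (y : B) (c : C) (w : B ⊗[k] C) :
    applyFst k f (w * (y ⊗ₜ[k] c)) = applyFst k (f ∘ₗ LinearMap.mulRight k y) w * c := by
  induction w using TensorProduct.induction_on with
  | zero => simp
  | tmul u v => simp [Algebra.TensorProduct.tmul_mul_tmul, smul_mul_assoc]
  | add x y hx hy => simp [add_mul, map_add, hx, hy]

lemma GO.applyFst_mul_one_tmul_right (f : B →ₗ[k] k) (c : C) (w : B ⊗[k] C) :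
    applyFst k f (w * ((1 : B) ⊗ₜ[k] c)) = applyFst k f w * c := by
  have := GO.applyFst_mul_tmul_right (k := k) f 1 c w
  simpa using this

end MulLemmas
end GOMul


noncomputable section GO
variable {k : Type*} [Field k] {A : Type*} [Ring A] [HopfAlgebra k A]

open Coalgebra

local notation "𝒮" => HopfAlgebra.antipode (R := k) (A := A)
local notation "Δ" => Coalgebra.comul (R := k) (A := A)
local notation "ε" => Coalgebra.counit (R := k) (A := A)

lemma GO.sumc1 {ι : Type*} {a : A} (r : Coalgebra.Repr k a ι) :
    ∑ i ∈ r.index, ε (r.left i) • r.right i = a := by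
  have h := congrArg (TensorProduct.lid k A) (Coalgebra.sum_counit_tmul_eq (R := k) r)
  simp only [map_sum, TensorProduct.lid_tmul, TensorProduct.lid_symm_apply] at h
  simpa using h

lemma GO.sumc2 {ι : Type*} {a : A} (r : Coalgebra.Repr k a ι) :
    ∑ i ∈ r.index, ε (r.right i) • r.left i = a := by
  have h := congrArg (TensorProduct.rid k A) (Coalgebra.sum_tmul_counit_eq (R := k) r)
  simp only [map_sum, TensorProduct.rid_tmul] at h
  simpa using h

/-- product of two representations -/
def GO.mulRepr {ι κ : Type*} {a b : A} (r1 : Coalgebra.Repr k a ι) (r2 : Coalgebra.Repr k b κ) :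
    Coalgebra.Repr k (a * b) (ι × κ) where
  index := r1.index ×ˢ r2.index
  left := fun p => r1.left p.1 * r2.left p.2
  right := fun p => r1.right p.1 * r2.right p.2
  eq := by
    rw [Finset.sum_product, Bialgebra.comul_mul, ← r1.eq, ← r2.eq, Finset.sum_mul_sum]
    simp only [Algebra.TensorProduct.tmul_mul_tmul]

@[simp] lemma GO.antipode_one' : 𝒮 (1 : A) = 1 := by
  have h := HopfAlgebra.mul_antipode_rTensor_comul_apply (R := k) (A := A) 1
  simpa [Algebra.TensorProduct.one_def] using h

/-- the 6-linear evaluation map used to prove the antipode is an antihomomorphism;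
input `(a1 ⊗ (a2 ⊗ a3)) ⊗ (b1 ⊗ (b2 ⊗ b3))`, output `S(a1*b1) * ((a2*b2) * (S b3 * S a3))`. -/
def GO.C0 : ((A ⊗[k] (A ⊗[k] A)) ⊗[k] (A ⊗[k] (A ⊗[k] A))) →ₗ[k] A :=
  LinearMap.mul' k A ∘ₗ
    TensorProduct.map
      (𝒮 ∘ₗ LinearMap.mul' k A)
      (LinearMap.mul' k A ∘ₗ
        TensorProduct.map (LinearMap.mul' k A)
          (LinearMap.mul' k A ∘ₗ TensorProduct.map 𝒮 𝒮 ∘ₗ (TensorProduct.comm k A A).toLinearMap)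
        ∘ₗ (TensorProduct.tensorTensorTensorComm k A A A A).toLinearMap) ∘ₗ
    (TensorProduct.tensorTensorTensorComm k A (A ⊗[k] A) A (A ⊗[k] A)).toLinearMap

@[simp] lemma GO.C0_tmul (a1 a2 a3 b1 b2 b3 : A) :
    GO.C0 ((a1 ⊗ₜ[k] (a2 ⊗ₜ[k] a3)) ⊗ₜ[k] (b1 ⊗ₜ[k] (b2 ⊗ₜ[k] b3)))
      = 𝒮 (a1 * b1) * ((a2 * b2) * (𝒮 b3 * 𝒮 a3)) := by
  simp [GO.C0]

end GO

noncomputable section GO2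
variable {k : Type*} [Field k] {A : Type*} [Ring A] [HopfAlgebra k A]
open Coalgebra

local notation "𝒮" => HopfAlgebra.antipode (R := k) (A := A)
local notation "ε" => Coalgebra.counit (R := k) (A := A)

/-- `∑ (C * (left p * S (right p))) * D = ε e • (C * D)` -/
lemma GO.collapse1 (C D : A) {ι : Type*} {e : A} (r : Coalgebra.Repr k e ι) :
    ∑ p ∈ r.index, (C * (r.left p * 𝒮 (r.right p))) * D = ε e • (C * D) := by
  rw [← Finset.sum_mul, ← Finset.mul_sum, HopfAlgebra.sum_mul_antipode_eq_smul r,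
    mul_smul_comm, mul_one, smul_mul_assoc]

lemma GO.collapse2 (C : A) {ι : Type*} {e : A} (r : Coalgebra.Repr k e ι) :
    ∑ p ∈ r.index, C * (r.left p * 𝒮 (r.right p)) = ε e • C := by
  rw [← Finset.mul_sum, HopfAlgebra.sum_mul_antipode_eq_smul r, mul_smul_comm, mul_one]

lemma GO.smul_factor1 {ι : Type*} (s : Finset ι) (c : ι → k) (F : ι → A) (x D : A) :
    ∑ j ∈ s, c j • ((F j * x) * D) = ((∑ j ∈ s, c j • F j) * x) * D := by
  rw [Finset.sum_mul, Finset.sum_mul]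
  exact Finset.sum_congr rfl fun j _ => by rw [smul_mul_assoc, smul_mul_assoc]

lemma GO.smul_antipode_sum {ι : Type*} {e : A} (r : Coalgebra.Repr k e ι) (u : A) :
    ∑ j ∈ r.index, ε (r.right j) • 𝒮 (u * r.left j) = 𝒮 (u * e) := by
  have : ∀ j, ε (r.right j) • 𝒮 (u * r.left j) = 𝒮 (u * (ε (r.right j) • r.left j)) := by
    intro j; rw [mul_smul_comm, map_smul]
  rw [Finset.sum_congr rfl fun j _ => this j, ← map_sum, ← Finset.mul_sum, GO.sumc2]

lemma GO.smul_antipode_sum' {ι : Type*} {e : A} (r : Coalgebra.Repr k e ι) (u : A) :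
    ∑ j ∈ r.index, ε (r.right j) • 𝒮 (r.left j * u) = 𝒮 (e * u) := by
  have : ∀ j, ε (r.right j) • 𝒮 (r.left j * u) = 𝒮 ((ε (r.right j) • r.left j) * u) := by
    intro j; rw [smul_mul_assoc, map_smul]
  rw [Finset.sum_congr rfl fun j _ => this j, ← map_sum, ← Finset.sum_mul, GO.sumc2]

lemma GO.h5 (P : A) {ι : Type*} {e : A} (r : Coalgebra.Repr k e ι) :
    ∑ i ∈ r.index, ε (r.left i) • (P * 𝒮 (r.right i)) = P * 𝒮 e := by
  have : ∀ i, ε (r.left i) • (P * 𝒮 (r.right i)) = P * 𝒮 (ε (r.left i) • r.right i) := by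
    intro i; rw [map_smul, mul_smul_comm]
  rw [Finset.sum_congr rfl fun i _ => this i, ← Finset.mul_sum, ← map_sum, GO.sumc1]

lemma GO.h6 (Q : A) {ι : Type*} {e : A} (r : Coalgebra.Repr k e ι) :
    ∑ j ∈ r.index, ε (r.left j) • (𝒮 (r.right j) * Q) = 𝒮 e * Q := by
  have : ∀ j, ε (r.left j) • (𝒮 (r.right j) * Q) = 𝒮 (ε (r.left j) • r.right j) * Q := by
    intro j; rw [map_smul, smul_mul_assoc]
  rw [Finset.sum_congr rfl fun j _ => this j, ← Finset.sum_mul, ← map_sum, GO.sumc1]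

theorem GO.antipode_mul (a b : A) : 𝒮 (a * b) = 𝒮 b * 𝒮 a := by
  classical
  set ra := Coalgebra.Repr.arbitrary k a with hra
  set rb := Coalgebra.Repr.arbitrary k b with hrb
  set La : (i : ra.ι) → Coalgebra.Repr k (ra.left i) (A × A) :=
    fun i => Coalgebra.Repr.arbitrary k (ra.left i) with hLa
  set Ra : (i : ra.ι) → Coalgebra.Repr k (ra.right i) (A × A) :=
    fun i => Coalgebra.Repr.arbitrary k (ra.right i) with hRa
  set Lb : (j : rb.ι) → Coalgebra.Repr k (rb.left j) (A × A) :=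
    fun j => Coalgebra.Repr.arbitrary k (rb.left j) with hLb
  set Rb : (j : rb.ι) → Coalgebra.Repr k (rb.right j) (A × A) :=
    fun j => Coalgebra.Repr.arbitrary k (rb.right j) with hRb
  have key := congrArg₂ (fun u v => GO.C0 (u ⊗ₜ[k] v))
    (Coalgebra.sum_tmul_tmul_eq (R := k) ra La Ra)
    (Coalgebra.sum_tmul_tmul_eq (R := k) rb Lb Rb)
  simp only [TensorProduct.sum_tmul, TensorProduct.tmul_sum, map_sum, GO.C0_tmul] at key
  -- `key : Σ_j Σ_{p ∈ Lb j} Σ_i Σ_{q ∈ La i} [left-split term]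
  --       = Σ_j Σ_{p ∈ Rb j} Σ_i Σ_{q ∈ Ra i} [right-split term]`
  have way1 : (∑ j ∈ rb.index, ∑ p ∈ (Rb j).index, ∑ i ∈ ra.index, ∑ q ∈ (Ra i).index,
      𝒮 (ra.left i * rb.left j) *
        ((Ra i).left q * (Rb j).left p *
          (𝒮 ((Rb j).right p) * 𝒮 ((Ra i).right q)))) = 𝒮 (a * b) := by
    calc (∑ j ∈ rb.index, ∑ p ∈ (Rb j).index, ∑ i ∈ ra.index, ∑ q ∈ (Ra i).index,
          𝒮 (ra.left i * rb.left j) *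
          ((Ra i).left q * (Rb j).left p * (𝒮 ((Rb j).right p) * 𝒮 ((Ra i).right q))))
        = ∑ j ∈ rb.index, ∑ i ∈ ra.index, ∑ q ∈ (Ra i).index, ∑ p ∈ (Rb j).index,
          (𝒮 (ra.left i * rb.left j) * (Ra i).left q *
            ((Rb j).left p * 𝒮 ((Rb j).right p))) * 𝒮 ((Ra i).right q) := by
          refine Finset.sum_congr rfl fun j _ => ?_
          rw [Finset.sum_comm]
          refine Finset.sum_congr rfl fun i _ => ?_
          rw [Finset.sum_comm]
          refine Finset.sum_congr rfl fun q _ => Finset.sum_congr rfl fun p _ => ?_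
          noncomm_ring
      _ = ∑ j ∈ rb.index, ∑ i ∈ ra.index, ∑ q ∈ (Ra i).index,
            ε (rb.right j) • (𝒮 (ra.left i * rb.left j) * (Ra i).left q *
              𝒮 ((Ra i).right q)) := by
          refine Finset.sum_congr rfl fun j _ => Finset.sum_congr rfl fun i _ =>
            Finset.sum_congr rfl fun q _ => ?_
          exact GO.collapse1 _ _ (Rb j)
      _ = ∑ j ∈ rb.index, ∑ i ∈ ra.index,
            ε (rb.right j) • (ε (ra.right i) • 𝒮 (ra.left i * rb.left j)) := by
          refine Finset.sum_congr rfl fun j _ => Finset.sum_congr rfl fun i _ => ?_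
          rw [← Finset.smul_sum]
          congr 1
          calc (∑ q ∈ (Ra i).index,
                𝒮 (ra.left i * rb.left j) * (Ra i).left q * 𝒮 ((Ra i).right q))
              = ∑ q ∈ (Ra i).index,
                𝒮 (ra.left i * rb.left j) * ((Ra i).left q * 𝒮 ((Ra i).right q)) := by
                exact Finset.sum_congr rfl fun q _ => by rw [mul_assoc]
            _ = ε (ra.right i) • 𝒮 (ra.left i * rb.left j) := GO.collapse2 _ (Ra i)
      _ = ∑ j ∈ rb.index, ε (rb.right j) • 𝒮 (a * rb.left j) := by
          refine Finset.sum_congr rfl fun j _ => ?_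
          rw [← Finset.smul_sum, GO.smul_antipode_sum' ra (rb.left j)]
      _ = 𝒮 (a * b) := GO.smul_antipode_sum rb a
  have way2 : (∑ j ∈ rb.index, ∑ p ∈ (Lb j).index, ∑ i ∈ ra.index, ∑ q ∈ (La i).index,
      𝒮 ((La i).left q * (Lb j).left p) *
        ((La i).right q * (Lb j).right p *
          (𝒮 (rb.right j) * 𝒮 (ra.right i)))) = 𝒮 b * 𝒮 a := by
    calc (∑ j ∈ rb.index, ∑ p ∈ (Lb j).index, ∑ i ∈ ra.index, ∑ q ∈ (La i).index,
          𝒮 ((La i).left q * (Lb j).left p) *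
          ((La i).right q * (Lb j).right p * (𝒮 (rb.right j) * 𝒮 (ra.right i))))
        = ∑ j ∈ rb.index, ∑ i ∈ ra.index, ∑ q ∈ (La i).index, ∑ p ∈ (Lb j).index,
          (𝒮 ((La i).left q * (Lb j).left p) * ((La i).right q * (Lb j).right p)) *
            (𝒮 (rb.right j) * 𝒮 (ra.right i)) := by
          refine Finset.sum_congr rfl fun j _ => ?_
          rw [Finset.sum_comm]
          refine Finset.sum_congr rfl fun i _ => ?_
          rw [Finset.sum_comm]
          refine Finset.sum_congr rfl fun q _ => Finset.sum_congr rfl fun p _ => ?_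
          noncomm_ring
      _ = ∑ j ∈ rb.index, ∑ i ∈ ra.index,
            (ε (ra.left i) * ε (rb.left j)) • (𝒮 (rb.right j) * 𝒮 (ra.right i)) := by
          refine Finset.sum_congr rfl fun j _ => Finset.sum_congr rfl fun i _ => ?_
          have hfact : (∑ q ∈ (La i).index, ∑ p ∈ (Lb j).index,
              (𝒮 ((La i).left q * (Lb j).left p) * ((La i).right q * (Lb j).right p)) *
                (𝒮 (rb.right j) * 𝒮 (ra.right i)))
              = (∑ q ∈ (La i).index, ∑ p ∈ (Lb j).index,
                  𝒮 ((La i).left q * (Lb j).left p) * ((La i).right q * (Lb j).right p)) *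
                (𝒮 (rb.right j) * 𝒮 (ra.right i)) := by
            rw [Finset.sum_mul]
            exact Finset.sum_congr rfl fun q _ => by rw [Finset.sum_mul]
          rw [hfact]
          have hprod : (∑ q ∈ (La i).index, ∑ p ∈ (Lb j).index,
              𝒮 ((La i).left q * (Lb j).left p) * ((La i).right q * (Lb j).right p))
              = ε (ra.left i * rb.left j) • (1 : A) := by
            rw [← Finset.sum_product']
            exact HopfAlgebra.sum_antipode_mul_eq_smul (GO.mulRepr (La i) (Lb j))
          rw [hprod, smul_mul_assoc, one_mul, Bialgebra.counit_mul]
      _ = ∑ j ∈ rb.index,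
            ε (rb.left j) • (𝒮 (rb.right j) * 𝒮 a) := by
          refine Finset.sum_congr rfl fun j _ => ?_
          have : ∀ i ∈ ra.index, (ε (ra.left i) * ε (rb.left j)) •
              (𝒮 (rb.right j) * 𝒮 (ra.right i))
              = ε (rb.left j) • (ε (ra.left i) • (𝒮 (rb.right j) * 𝒮 (ra.right i))) := by
            intro i _; rw [smul_smul, mul_comm]
          rw [Finset.sum_congr rfl this, ← Finset.smul_sum, GO.h5 (𝒮 (rb.right j)) ra]
      _ = 𝒮 b * 𝒮 a := GO.h6 (𝒮 a) rb
  rw [way1, way2] at key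
  exact key.symm


end GO2

noncomputable section GOStrong
variable {k : Type*} [Field k] {A : Type*} [Ring A] [HopfAlgebra k A]
open Coalgebra

local notation "𝒮" => HopfAlgebra.antipode (R := k) (A := A)
local notation "ε" => Coalgebra.counit (R := k) (A := A)
local notation "Δ" => Coalgebra.comul (R := k) (A := A)

lemma GO.applySnd_comul (g : A →ₗ[k] k) {ι : Type*} (b : A) (rb : Coalgebra.Repr k b ι) :
    applySnd k g (Δ b) = ∑ j ∈ rb.index, g (rb.right j) • rb.left j := by
  rw [← rb.eq, map_sum]; simp

lemma GO.applyFst_comul (g : A →ₗ[k] k) {ι : Type*} (b : A) (rb : Coalgebra.Repr k b ι) :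
    applyFst k g (Δ b) = ∑ j ∈ rb.index, g (rb.left j) • rb.right j := by
  rw [← rb.eq, map_sum]; simp

lemma GO.keyK {ι : Type*} (a : A) (ra : Coalgebra.Repr k a ι) :
    (1 : A) ⊗ₜ[k] a = ∑ i ∈ ra.index, (𝒮 (ra.left i) ⊗ₜ[k] (1 : A)) * Δ (ra.right i) := by
  classical
  set La : (i : ra.ι) → Coalgebra.Repr k (ra.left i) (A × A) :=
    fun i => Coalgebra.Repr.arbitrary k (ra.left i)
  set Ra : (i : ra.ι) → Coalgebra.Repr k (ra.right i) (A × A) :=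
    fun i => Coalgebra.Repr.arbitrary k (ra.right i)
  have bridge := Coalgebra.sum_tmul_tmul_eq (R := k) ra La Ra
  set κ : A ⊗[k] (A ⊗[k] A) →ₗ[k] A ⊗[k] A :=
    (LinearMap.rTensor A (LinearMap.mul' k A ∘ₗ LinearMap.rTensor A 𝒮)) ∘ₗ
      (TensorProduct.assoc k A A A).symm.toLinearMap with hκ
  have hκt : ∀ u v w : A, κ (u ⊗ₜ[k] (v ⊗ₜ[k] w)) = (𝒮 u * v) ⊗ₜ[k] w := by
    intro u v w; simp [hκ]
  have key := congrArg κ bridge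
  simp only [map_sum, hκt] at key
  have lhs : (∑ i ∈ ra.index, ∑ p ∈ (La i).index,
      (𝒮 ((La i).left p) * (La i).right p) ⊗ₜ[k] ra.right i) = (1 : A) ⊗ₜ[k] a := by
    calc (∑ i ∈ ra.index, ∑ p ∈ (La i).index,
        (𝒮 ((La i).left p) * (La i).right p) ⊗ₜ[k] ra.right i)
        = ∑ i ∈ ra.index, (ε (ra.left i) • (1 : A)) ⊗ₜ[k] ra.right i := by
          refine Finset.sum_congr rfl fun i _ => ?_
          rw [← TensorProduct.sum_tmul, HopfAlgebra.sum_antipode_mul_eq_smul (La i)]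
      _ = ∑ i ∈ ra.index, (1 : A) ⊗ₜ[k] (ε (ra.left i) • ra.right i) := by
          refine Finset.sum_congr rfl fun i _ => ?_
          rw [TensorProduct.smul_tmul]
      _ = (1 : A) ⊗ₜ[k] a := by rw [← TensorProduct.tmul_sum, GO.sumc1]
  have rhs : ∀ i ∈ ra.index, (∑ q ∈ (Ra i).index,
      (𝒮 (ra.left i) * (Ra i).left q) ⊗ₜ[k] (Ra i).right q)
      = (𝒮 (ra.left i) ⊗ₜ[k] (1 : A)) * Δ (ra.right i) := by
    intro i _
    rw [← (Ra i).eq, Finset.mul_sum]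
    refine Finset.sum_congr rfl fun q _ => ?_
    rw [Algebra.TensorProduct.tmul_mul_tmul, one_mul]
  rw [lhs] at key
  rw [key]
  exact Finset.sum_congr rfl rhs

lemma GO.keyK2 {ι : Type*} (a : A) (ra : Coalgebra.Repr k a ι) :
    a ⊗ₜ[k] (1 : A) = ∑ i ∈ ra.index, Δ (ra.left i) * ((1 : A) ⊗ₜ[k] 𝒮 (ra.right i)) := by
  classical
  set La : (i : ra.ι) → Coalgebra.Repr k (ra.left i) (A × A) :=
    fun i => Coalgebra.Repr.arbitrary k (ra.left i)
  set Ra : (i : ra.ι) → Coalgebra.Repr k (ra.right i) (A × A) :=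
    fun i => Coalgebra.Repr.arbitrary k (ra.right i)
  have bridge := Coalgebra.sum_tmul_tmul_eq (R := k) ra La Ra
  set κ : A ⊗[k] (A ⊗[k] A) →ₗ[k] A ⊗[k] A :=
    LinearMap.lTensor A (LinearMap.mul' k A ∘ₗ LinearMap.lTensor A 𝒮) with hκ
  have hκt : ∀ u v w : A, κ (u ⊗ₜ[k] (v ⊗ₜ[k] w)) = u ⊗ₜ[k] (v * 𝒮 w) := by
    intro u v w; simp [hκ]
  have key := congrArg κ bridge
  simp only [map_sum, hκt] at key
  have rhs : (∑ i ∈ ra.index, ∑ q ∈ (Ra i).index,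
      ra.left i ⊗ₜ[k] ((Ra i).left q * 𝒮 ((Ra i).right q))) = a ⊗ₜ[k] (1 : A) := by
    calc (∑ i ∈ ra.index, ∑ q ∈ (Ra i).index,
        ra.left i ⊗ₜ[k] ((Ra i).left q * 𝒮 ((Ra i).right q)))
        = ∑ i ∈ ra.index, ra.left i ⊗ₜ[k] (ε (ra.right i) • (1 : A)) := by
          refine Finset.sum_congr rfl fun i _ => ?_
          rw [← TensorProduct.tmul_sum, HopfAlgebra.sum_mul_antipode_eq_smul (Ra i)]
      _ = ∑ i ∈ ra.index, (ε (ra.right i) • ra.left i) ⊗ₜ[k] (1 : A) := by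
          refine Finset.sum_congr rfl fun i _ => ?_
          rw [TensorProduct.smul_tmul]
      _ = a ⊗ₜ[k] (1 : A) := by rw [← TensorProduct.sum_tmul, GO.sumc2]
  have lhs : ∀ i ∈ ra.index, (∑ p ∈ (La i).index,
      (La i).left p ⊗ₜ[k] ((La i).right p * 𝒮 (ra.right i)))
      = Δ (ra.left i) * ((1 : A) ⊗ₜ[k] 𝒮 (ra.right i)) := by
    intro i _
    rw [← (La i).eq, Finset.sum_mul]
    refine Finset.sum_congr rfl fun p _ => ?_
    rw [Algebra.TensorProduct.tmul_mul_tmul, mul_one]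
  rw [rhs] at key
  rw [← key]
  exact Finset.sum_congr rfl lhs

/-- strong invariance I : `(id ⊗ φ)((1 ⊗ a)Δb) = ∑ φ(a₍₂₎ b) • S(a₍₁₎)` -/
lemma GO.strongInv1 (φ : A →ₗ[k] k) (hint : ∀ c : A, applySnd k φ (Δ c) = φ c • (1 : A))
    {ι : Type*} (a b : A) (ra : Coalgebra.Repr k a ι) :
    applySnd k (φ ∘ₗ LinearMap.mulLeft k a) (Δ b)
      = ∑ i ∈ ra.index, φ (ra.right i * b) • 𝒮 (ra.left i) := by
  have mulK : ((1 : A) ⊗ₜ[k] a) * Δ b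
      = ∑ i ∈ ra.index, (𝒮 (ra.left i) ⊗ₜ[k] (1 : A)) * Δ (ra.right i * b) := by
    rw [GO.keyK a ra, Finset.sum_mul]
    exact Finset.sum_congr rfl fun i _ => by
      rw [mul_assoc, ← Bialgebra.comul_mul]
  have h1 : applySnd k φ (((1 : A) ⊗ₜ[k] a) * Δ b)
      = applySnd k (φ ∘ₗ LinearMap.mulLeft k a) (Δ b) :=
    GO.applySnd_mul_one_tmul_left φ a (Δ b)
  rw [← h1, mulK, map_sum]
  refine Finset.sum_congr rfl fun i _ => ?_
  rw [GO.applySnd_mul_tmul_one_left, hint, mul_smul_comm, mul_one]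

/-- strong invariance II : `(φ ⊗ id)(Δb (a ⊗ 1)) = ∑ φ(b a₍₁₎) • (d * S(a₍₂₎))`
where `(φ ⊗ id) ∘ Δ = φ(·) d`. -/
lemma GO.strongInv2 (φ : A →ₗ[k] k) (d : A)
    (hδ : ∀ c : A, applyFst k φ (Δ c) = φ c • d) {ι : Type*} (a b : A) (ra : Coalgebra.Repr k a ι) :
    applyFst k (φ ∘ₗ LinearMap.mulRight k a) (Δ b)
      = ∑ i ∈ ra.index, φ (b * ra.left i) • (d * 𝒮 (ra.right i)) := by
  have mulK : Δ b * (a ⊗ₜ[k] (1 : A))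
      = ∑ i ∈ ra.index, Δ (b * ra.left i) * ((1 : A) ⊗ₜ[k] 𝒮 (ra.right i)) := by
    rw [GO.keyK2 a ra, Finset.mul_sum]
    exact Finset.sum_congr rfl fun i _ => by
      rw [← mul_assoc, ← Bialgebra.comul_mul]
  have h1 : applyFst k φ (Δ b * (a ⊗ₜ[k] (1 : A)))
      = applyFst k (φ ∘ₗ LinearMap.mulRight k a) (Δ b) := by
    have := GO.applyFst_mul_tmul_right (k := k) φ a (1 : A) (Δ b)
    simpa using this
  rw [← h1, mulK, map_sum]
  refine Finset.sum_congr rfl fun i _ => ?_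
  rw [GO.applyFst_mul_one_tmul_right, hδ, smul_mul_assoc]

end GOStrong

noncomputable section GODelta
variable {k : Type*} [Field k] {A : Type*} [Ring A] [HopfAlgebra k A]
open Coalgebra

local notation "𝒮" => HopfAlgebra.antipode (R := k) (A := A)
local notation "ε" => Coalgebra.counit (R := k) (A := A)
local notation "Δ" => Coalgebra.comul (R := k) (A := A)

/-- the inverse of the antipode, as a linear map -/
def GO.sinv (hbij : Function.Bijective (HopfAlgebra.antipode (R := k) (A := A))) :
    A →ₗ[k] A :=
  (LinearEquiv.ofBijective 𝒮 hbij).symm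

@[simp] lemma GO.sinv_antipode (hbij : Function.Bijective (HopfAlgebra.antipode (R := k) (A := A)))
    (a : A) : GO.sinv hbij (𝒮 a) = a :=
  (LinearEquiv.ofBijective 𝒮 hbij).symm_apply_apply a

@[simp] lemma GO.antipode_sinv (hbij : Function.Bijective (HopfAlgebra.antipode (R := k) (A := A)))
    (a : A) : 𝒮 (GO.sinv hbij a) = a :=
  (LinearEquiv.ofBijective 𝒮 hbij).apply_symm_apply a

/-- `∑ S⁻¹(b₍₂₎) * b₍₁₎ = ε(b) • 1` -/
lemma GO.need1 (hbij : Function.Bijective (HopfAlgebra.antipode (R := k) (A := A)))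
    {ι : Type*} (b : A) (rb : Coalgebra.Repr k b ι) :
    ∑ j ∈ rb.index, GO.sinv hbij (rb.right j) * rb.left j = ε b • (1 : A) := by
  apply hbij.injective
  rw [map_sum, map_smul, GO.antipode_one']
  calc ∑ j ∈ rb.index, 𝒮 (GO.sinv hbij (rb.right j) * rb.left j)
      = ∑ j ∈ rb.index, 𝒮 (rb.left j) * rb.right j := by
        refine Finset.sum_congr rfl fun j _ => ?_
        rw [GO.antipode_mul, GO.antipode_sinv]
    _ = ε b • (1 : A) := HopfAlgebra.sum_antipode_mul_eq_smul rb

section PhiFacts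
variable (φ : A →ₗ[k] k) (d : A)

/-- `φ(S a) = φ(a d)` for a faithful left integral with modular element `d` -/
lemma GO.phi_antipode
    (hint : ∀ c : A, applySnd k φ (Δ c) = φ c • (1 : A))
    (hδ : ∀ c : A, applyFst k φ (Δ c) = φ c • d)
    (hfl : ∀ a : A, (∀ b : A, φ (a * b) = 0) → a = 0)
    (a : A) : φ (𝒮 a) = φ (a * d) := by
  classical
  set ra := Coalgebra.Repr.arbitrary k a with hra
  have idc : (∑ i ∈ ra.index, φ (𝒮 (ra.left i)) • ra.right i) = φ (a * d) • (1 : A) := by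
    have hzero : ∀ b : A,
        φ (((∑ i ∈ ra.index, φ (𝒮 (ra.left i)) • ra.right i) - φ (a * d) • (1 : A)) * b)
          = 0 := by
      intro b
      have hEb : φ ((∑ i ∈ ra.index, φ (𝒮 (ra.left i)) • ra.right i) * b)
          = φ b * φ (a * d) := by
        have h1 : (∑ i ∈ ra.index, φ (𝒮 (ra.left i)) • ra.right i) * b
            = ∑ i ∈ ra.index, φ (𝒮 (ra.left i)) • (ra.right i * b) := by
          rw [Finset.sum_mul]
          exact Finset.sum_congr rfl fun i _ => by rw [smul_mul_assoc]
        have h2 : φ ((∑ i ∈ ra.index, φ (𝒮 (ra.left i)) • ra.right i) * b)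
            = φ (𝒮 (∑ i ∈ ra.index, φ (ra.right i * b) • ra.left i)) := by
          rw [h1, map_sum, map_sum, map_sum]
          refine Finset.sum_congr rfl fun i _ => ?_
          simp [map_smul, mul_comm]
        have h3 : φ (𝒮 (∑ i ∈ ra.index, φ (ra.right i * b) • ra.left i))
            = φ (applySnd k (φ ∘ₗ LinearMap.mulLeft k a) (Δ b)) := by
          rw [GO.strongInv1 φ hint a b ra, map_sum, map_sum, map_sum]
          refine Finset.sum_congr rfl fun i _ => ?_
          rw [map_smul]
        set rb := Coalgebra.Repr.arbitrary k b with hrb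
        have h4 : φ (applySnd k (φ ∘ₗ LinearMap.mulLeft k a) (Δ b))
            = φ (a * applyFst k φ (Δ b)) := by
          rw [GO.applySnd_comul _ b rb, GO.applyFst_comul φ b rb, map_sum, Finset.mul_sum,
            map_sum]
          refine Finset.sum_congr rfl fun j _ => ?_
          rw [map_smul, mul_smul_comm, map_smul, smul_eq_mul, smul_eq_mul,
            LinearMap.comp_apply, LinearMap.mulLeft_apply, mul_comm]
        rw [h2, h3, h4, hδ, mul_smul_comm, map_smul, smul_eq_mul]
      rw [sub_mul, map_sub, hEb, smul_mul_assoc, one_mul, map_smul, smul_eq_mul,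
        mul_comm, sub_self]
    have := hfl _ hzero
    exact sub_eq_zero.mp this
  have h5 : ε (∑ i ∈ ra.index, φ (𝒮 (ra.left i)) • ra.right i) = φ (𝒮 a) := by
    have h5a : φ (𝒮 a) = φ (𝒮 (∑ i ∈ ra.index, ε (ra.right i) • ra.left i)) := by
      rw [GO.sumc2]
    rw [map_sum, h5a, map_sum, map_sum]
    exact Finset.sum_congr rfl fun i _ => by
      rw [map_smul, map_smul, map_smul, smul_eq_mul, smul_eq_mul, mul_comm]
  have h6 := congrArg ε idc
  rw [h5, map_smul, Bialgebra.counit_one, smul_eq_mul, mul_one] at h6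
  exact h6

/-- `φ(d * S a) = φ(a)` for a faithful left integral with modular element `d` -/
lemma GO.delta_phi_antipode
    (hint : ∀ c : A, applySnd k φ (Δ c) = φ c • (1 : A))
    (hδ : ∀ c : A, applyFst k φ (Δ c) = φ c • d)
    (hfr : ∀ a : A, (∀ b : A, φ (b * a) = 0) → a = 0)
    (a : A) : φ (d * 𝒮 a) = φ a := by
  classical
  set ra := Coalgebra.Repr.arbitrary k a with hra
  have idb : (∑ i ∈ ra.index, φ (d * 𝒮 (ra.right i)) • ra.left i) = φ a • (1 : A) := by
    have hzero : ∀ b : A,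
        φ (b * ((∑ i ∈ ra.index, φ (d * 𝒮 (ra.right i)) • ra.left i) - φ a • (1 : A)))
          = 0 := by
      intro b
      have hEb : φ (b * ∑ i ∈ ra.index, φ (d * 𝒮 (ra.right i)) • ra.left i)
          = φ b * φ a := by
        have h1 : b * (∑ i ∈ ra.index, φ (d * 𝒮 (ra.right i)) • ra.left i)
            = ∑ i ∈ ra.index, φ (d * 𝒮 (ra.right i)) • (b * ra.left i) := by
          rw [Finset.mul_sum]
          exact Finset.sum_congr rfl fun i _ => by rw [mul_smul_comm]
        have h2 : φ (b * ∑ i ∈ ra.index, φ (d * 𝒮 (ra.right i)) • ra.left i)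
            = φ (applyFst k (φ ∘ₗ LinearMap.mulRight k a) (Δ b)) := by
          rw [h1, GO.strongInv2 φ d hδ a b ra, map_sum, map_sum]
          refine Finset.sum_congr rfl fun i _ => ?_
          simp [map_smul, mul_comm]
        set rb := Coalgebra.Repr.arbitrary k b with hrb
        have h3 : φ (applyFst k (φ ∘ₗ LinearMap.mulRight k a) (Δ b))
            = φ ((applySnd k φ (Δ b)) * a) := by
          rw [GO.applyFst_comul _ b rb, GO.applySnd_comul φ b rb, map_sum,
            Finset.sum_mul, map_sum]
          refine Finset.sum_congr rfl fun j _ => ?_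
          simp [map_smul, smul_mul_assoc, mul_comm]
        rw [h2, h3, hint, smul_mul_assoc, one_mul, map_smul, smul_eq_mul]
      rw [mul_sub, map_sub, hEb, mul_smul_comm, mul_one, map_smul, smul_eq_mul,
        mul_comm (φ a) (φ b), sub_self]
    exact sub_eq_zero.mp (hfr _ hzero)
  have h5 : ε (∑ i ∈ ra.index, φ (d * 𝒮 (ra.right i)) • ra.left i) = φ (d * 𝒮 a) := by
    have h5a : φ (d * 𝒮 a)
        = φ (d * 𝒮 (∑ i ∈ ra.index, ε (ra.left i) • ra.right i)) := by rw [GO.sumc1]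
    rw [map_sum, h5a, map_sum, Finset.mul_sum, map_sum]
    refine Finset.sum_congr rfl fun i _ => ?_
    simp [map_smul, mul_smul_comm, mul_comm]
  have h6 := congrArg ε idb
  rw [h5, map_smul, Bialgebra.counit_one, smul_eq_mul, mul_one] at h6
  exact h6

/-- the key commutation `φ(c d) = τ φ(d c)` -/
lemma GO.tau_comm
    (hbij : Function.Bijective (HopfAlgebra.antipode (R := k) (A := A)))
    (hint : ∀ c : A, applySnd k φ (Δ c) = φ c • (1 : A))
    (hδ : ∀ c : A, applyFst k φ (Δ c) = φ c • d)
    (hfl : ∀ a : A, (∀ b : A, φ (a * b) = 0) → a = 0)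
    (hfr : ∀ a : A, (∀ b : A, φ (b * a) = 0) → a = 0)
    (τ : k) (hτ : ∀ a : A, φ (𝒮 (𝒮 a)) = τ * φ a)
    (c : A) : φ (c * d) = τ * φ (d * c) := by
  have h1 : φ (d * c) = φ (GO.sinv hbij c) := by
    have h := GO.delta_phi_antipode φ d hint hδ hfr (GO.sinv hbij c)
    rwa [GO.antipode_sinv] at h
  have h2 : φ (c * d) = τ * φ (GO.sinv hbij c) := by
    have h2a := GO.phi_antipode φ d hint hδ hfl (𝒮 (GO.sinv hbij c))
    rw [GO.antipode_sinv] at h2a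
    have h2b := hτ (GO.sinv hbij c)
    rw [GO.antipode_sinv] at h2b
    rw [← h2a]
    exact h2b
  rw [h2, h1]

end PhiFacts
end GODelta

noncomputable section GOGalois
variable {k A X : Type*} [Field k] [Ring A] [HopfAlgebra k A] [Ring X] [Algebra k X]
open Coalgebra

local notation "Δ" => Coalgebra.comul (R := k) (A := A)
local notation "εA" => Coalgebra.counit (R := k) (A := A)

variable (G : GaloisContext k A X)

@[simp] lemma GO.galoisV_tmul (x y : X) :
    galoisV k A X G.α (x ⊗ₜ[k] y) = (x ⊗ₜ[k] (1 : A)) * G.α y := by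
  simp [galoisV]

lemma GO.V_beta (a : A) : galoisV k A X G.α (G.β a) = (1 : X) ⊗ₜ[k] a := by
  have h : G.V (G.β a) = TensorProduct.mk k X A 1 a :=
    G.V.apply_symm_apply _
  exact h

lemma GO.V_mul_alpha (t : X ⊗[k] X) (z : X) :
    galoisV k A X G.α t * G.α z
      = galoisV k A X G.α (LinearMap.lTensor X (LinearMap.mulRight k z) t) := by
  induction t using TensorProduct.induction_on with
  | zero => simp
  | tmul x y => simp [mul_assoc, ← map_mul]
  | add u v hu hv => rw [map_add, add_mul, hu, hv, ← map_add, ← map_add]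

lemma GO.applySnd_V (φX : X →ₗ[k] k)
    (hφX : ∀ x : X, applySnd k G.φ (G.α x) = φX x • (1 : X)) (t : X ⊗[k] X) :
    applySnd k G.φ (galoisV k A X G.α t) = applySnd k φX t := by
  induction t using TensorProduct.induction_on with
  | zero => simp
  | tmul x y =>
      rw [GO.galoisV_tmul, GO.applySnd_mul_tmul_one_left, hφX, GO.applySnd_tmul,
        mul_smul_comm, mul_one]
  | add u v hu hv => rw [map_add, map_add, map_add, hu, hv]

lemma GO.alpha_inj {x y : X} (h : G.α x = G.α y) : x = y := by
  have hx := G.counit_id x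
  have hy := G.counit_id y
  rw [← hx, ← hy, h]

lemma GO.one_tmul_cancel [Nontrivial X] {u v : A}
    (h : (1 : X) ⊗ₜ[k] u = (1 : X) ⊗ₜ[k] v) : u = v := by
  have h1 : (1 : X) ≠ 0 := one_ne_zero
  have hinj : LinearMap.ker (LinearMap.toSpanSingleton k X 1) = ⊥ := by
    rw [LinearMap.ker_eq_bot]
    intro c c' hcc
    exact smul_left_injective k h1 hcc
  obtain ⟨g, hg⟩ := LinearMap.exists_leftInverse_of_injective
    (LinearMap.toSpanSingleton k X 1) hinj
  have hg1 : g 1 = 1 := by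
    have := LinearMap.congr_fun hg (1 : k)
    simpa [LinearMap.toSpanSingleton] using this
  have := congrArg (applyFst k g) h
  rw [GO.applyFst_tmul, GO.applyFst_tmul, hg1, one_smul, one_smul] at this
  exact this

/-- `(φ_X ⊗ id)(α x) = φ_X(x) • δ` -/
lemma GO.applyFst_phiX [Nontrivial X] (φX : X →ₗ[k] k)
    (hφX : ∀ x : X, applySnd k G.φ (G.α x) = φX x • (1 : X)) (dA : A)
    (hδ : ∀ a : A, applyFst k G.φ (Δ a) = G.φ a • dA) (x : X) :
    applyFst k φX (G.α x) = φX x • dA := by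
  classical
  obtain ⟨s, hs⟩ := TensorProduct.exists_finset (R := k) (G.α x)
  set C : X ⊗[k] (A ⊗[k] A) →ₗ[k] X ⊗[k] A :=
    LinearMap.lTensor X (applyFst k G.φ) with hC
  have gen1 : ∀ (W : X ⊗[k] A) (c : A),
      (C ∘ₗ (TensorProduct.assoc k X A A).toLinearMap) (W ⊗ₜ[k] c)
        = (applySnd k G.φ W) ⊗ₜ[k] c := by
    intro W c
    induction W using TensorProduct.induction_on with
    | zero => rw [TensorProduct.zero_tmul, map_zero, map_zero, TensorProduct.zero_tmul]
    | tmul u a =>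
        rw [LinearMap.comp_apply, LinearEquiv.coe_coe, TensorProduct.assoc_tmul, hC,
          LinearMap.lTensor_tmul, GO.applyFst_tmul, GO.applySnd_tmul,
          TensorProduct.tmul_smul, TensorProduct.smul_tmul']
    | add u v hu hv => rw [TensorProduct.add_tmul, map_add, hu, hv, map_add,
        TensorProduct.add_tmul]
  set D : X ⊗[k] A →ₗ[k] X ⊗[k] A :=
    (C ∘ₗ (TensorProduct.assoc k X A A).toLinearMap) ∘ₗ
      LinearMap.rTensor A G.α.toLinearMap with hD
  set E : X ⊗[k] A →ₗ[k] X ⊗[k] A := C ∘ₗ LinearMap.lTensor X Δ with hE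
  have hDt : ∀ (y : X) (c : A), D (y ⊗ₜ[k] c) = (applySnd k G.φ (G.α y)) ⊗ₜ[k] c := by
    intro y c
    have h0 : D (y ⊗ₜ[k] c) = (C ∘ₗ (TensorProduct.assoc k X A A).toLinearMap)
        ((G.α y) ⊗ₜ[k] c) := by
      simp only [hD, LinearMap.comp_apply, LinearMap.rTensor_tmul, AlgHom.toLinearMap_apply]
    rw [h0, gen1]
  have hEt : ∀ (y : X) (c : A), E (y ⊗ₜ[k] c) = (G.φ c • y) ⊗ₜ[k] dA := by
    intro y c
    simp only [hE, LinearMap.comp_apply, LinearMap.lTensor_tmul, hC]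
    rw [hδ, TensorProduct.tmul_smul, TensorProduct.smul_tmul']
  have hL : D (G.α x) = (1 : X) ⊗ₜ[k] applyFst k φX (G.α x) := by
    conv_lhs => rw [hs]
    rw [map_sum]
    have h1 : ∀ p ∈ s, D (p.1 ⊗ₜ[k] p.2) = (1 : X) ⊗ₜ[k] (φX p.1 • p.2) := by
      intro p _
      rw [hDt, hφX, TensorProduct.smul_tmul]
    rw [Finset.sum_congr rfl h1, ← TensorProduct.tmul_sum]
    congr 1
    rw [hs, map_sum]
    simp
  have hR : E (G.α x) = (1 : X) ⊗ₜ[k] (φX x • dA) := by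
    conv_lhs => rw [hs]
    rw [map_sum]
    have h1 : ∀ p ∈ s, E (p.1 ⊗ₜ[k] p.2) = (G.φ p.2 • p.1) ⊗ₜ[k] dA := fun p _ => hEt _ _
    rw [Finset.sum_congr rfl h1, ← TensorProduct.sum_tmul]
    have h2 : (∑ p ∈ s, G.φ p.2 • p.1) = applySnd k G.φ (G.α x) := by
      rw [hs, map_sum]; simp
    rw [h2, hφX, TensorProduct.smul_tmul]
  have hDE : D (G.α x) = E (G.α x) := by
    simp only [hD, hE, LinearMap.comp_apply, LinearEquiv.coe_coe]
    rw [G.coassoc x]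
  exact GO.one_tmul_cancel (hL.symm.trans (hDE.trans hR))
/-- the map `x ⊗ a ↦ (1 ⊗ a) * α x` -/
def GO.Gam : X ⊗[k] A →ₗ[k] X ⊗[k] A :=
  LinearMap.mul' k (X ⊗[k] A) ∘ₗ
    TensorProduct.map (TensorProduct.mk k X A 1) G.α.toLinearMap ∘ₗ
    (TensorProduct.comm k X A).toLinearMap

@[simp] lemma GO.Gam_tmul (x : X) (a : A) :
    GO.Gam G (x ⊗ₜ[k] a) = ((1 : X) ⊗ₜ[k] a) * G.α x := by
  simp [GO.Gam]

/-- the map `x ⊗ a ↦ (1 ⊗ a) * (id ⊗ S⁻¹)(α x)` -/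
def GO.Lam (hbij : Function.Bijective (HopfAlgebra.antipode (R := k) (A := A))) :
    X ⊗[k] A →ₗ[k] X ⊗[k] A :=
  LinearMap.mul' k (X ⊗[k] A) ∘ₗ
    TensorProduct.map (TensorProduct.mk k X A 1)
      (LinearMap.lTensor X (GO.sinv hbij) ∘ₗ G.α.toLinearMap) ∘ₗ
    (TensorProduct.comm k X A).toLinearMap

@[simp] lemma GO.Lam_tmul (hbij : Function.Bijective (HopfAlgebra.antipode (R := k) (A := A)))
    (x : X) (a : A) :
    GO.Lam G hbij (x ⊗ₜ[k] a)
      = ((1 : X) ⊗ₜ[k] a) * (LinearMap.lTensor X (GO.sinv hbij) (G.α x)) := by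
  simp [GO.Lam]

/-- `Γ' ∘ Λ = id`, hence `Γ'` is surjective -/
lemma GO.Gam_Lam (hbij : Function.Bijective (HopfAlgebra.antipode (R := k) (A := A)))
    (u : X ⊗[k] A) : GO.Gam G (GO.Lam G hbij u) = u := by
  classical
  set ρ : A → A ⊗[k] A →ₗ[k] A := fun a =>
    LinearMap.mulLeft k a ∘ₗ LinearMap.mul' k A ∘ₗ LinearMap.rTensor A (GO.sinv hbij) ∘ₗ
      (TensorProduct.comm k A A).toLinearMap with hρ
  have hρt : ∀ (a c1 c2 : A), ρ a (c1 ⊗ₜ[k] c2) = a * (GO.sinv hbij c2 * c1) := by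
    intro a c1 c2; simp [hρ]
  set J : A → (X ⊗[k] A) ⊗[k] A →ₗ[k] X ⊗[k] A := fun a =>
    TensorProduct.lift (LinearMap.mk₂ k
      (fun W c => ((1 : X) ⊗ₜ[k] (a * GO.sinv hbij c)) * W)
      (fun W W' c => by rw [mul_add])
      (fun s W c => by rw [Algebra.mul_smul_comm])
      (fun W c c' => by rw [map_add, mul_add, TensorProduct.tmul_add, add_mul])
      (fun s W c => by
        rw [map_smul, Algebra.mul_smul_comm, TensorProduct.tmul_smul, smul_mul_assoc]))
    with hJ
  have hJt : ∀ (a : A) (W : X ⊗[k] A) (c : A),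
      J a (W ⊗ₜ[k] c) = ((1 : X) ⊗ₜ[k] (a * GO.sinv hbij c)) * W := by
    intro a W c; simp [hJ]
  -- it suffices to prove the statement on simple tensors
  have key : (GO.Gam G) ∘ₗ (GO.Lam G hbij) = LinearMap.id := by
    apply TensorProduct.ext'
    intro x a
    simp only [LinearMap.comp_apply, LinearMap.id_apply, GO.Lam_tmul]
    -- step 1 : push `Gam` through, getting `J`
    have claimA : ∀ w : X ⊗[k] A,
        GO.Gam G (((1 : X) ⊗ₜ[k] a) * LinearMap.lTensor X (GO.sinv hbij) w)
          = J a (LinearMap.rTensor A G.α.toLinearMap w) := by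
      intro w
      induction w using TensorProduct.induction_on with
      | zero => simp
      | tmul y c =>
          rw [LinearMap.lTensor_tmul, LinearMap.rTensor_tmul, hJt,
            Algebra.TensorProduct.tmul_mul_tmul, one_mul, GO.Gam_tmul,
            AlgHom.toLinearMap_apply]
      | add w1 w2 h1 h2 =>
          rw [map_add, mul_add, map_add, h1, h2, map_add (LinearMap.rTensor A G.α.toLinearMap)]
          exact (map_add (J a) _ _).symm
    rw [claimA (G.α x)]
    -- step 2 : use coassociativity
    have step2 : LinearMap.rTensor A G.α.toLinearMap (G.α x)
        = (TensorProduct.assoc k X A A).symm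
            (LinearMap.lTensor X (Coalgebra.comul (R := k) (A := A)) (G.α x)) := by
      rw [← G.coassoc x, LinearEquiv.symm_apply_apply]
    rw [step2]
    -- step 3 : rewrite `J ∘ assoc⁻¹` as `lTensor (ρ a)`
    have claimB : ∀ v : X ⊗[k] (A ⊗[k] A),
        J a ((TensorProduct.assoc k X A A).symm v) = LinearMap.lTensor X (ρ a) v := by
      intro v
      induction v using TensorProduct.induction_on with
      | zero => rw [(TensorProduct.assoc k X A A).symm.map_zero, map_zero, map_zero]
      | tmul y u =>
          induction u using TensorProduct.induction_on with
          | zero => rw [TensorProduct.tmul_zero, (TensorProduct.assoc k X A A).symm.map_zero,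
              map_zero, map_zero]
          | tmul c1 c2 =>
              rw [TensorProduct.assoc_symm_tmul, hJt, LinearMap.lTensor_tmul, hρt,
                Algebra.TensorProduct.tmul_mul_tmul, one_mul, mul_assoc]
          | add u1 u2 h1 h2 =>
              rw [TensorProduct.tmul_add, (TensorProduct.assoc k X A A).symm.map_add,
                map_add, h1, h2, ← map_add, ← TensorProduct.tmul_add]
      | add v1 v2 h1 h2 =>
          rw [(TensorProduct.assoc k X A A).symm.map_add, map_add, h1, h2, map_add]
    rw [claimB]
    -- step 4 : collapse using `need1` and the counit identity
    obtain ⟨s, hs⟩ := TensorProduct.exists_finset (R := k) (G.α x)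
    have hρΔ : ∀ c : A, ρ a (Coalgebra.comul (R := k) (A := A) c)
        = Coalgebra.counit (R := k) (A := A) c • a := by
      intro c
      set rc := Coalgebra.Repr.arbitrary k c with hrc
      rw [← rc.eq, map_sum]
      have h1 : ∀ j ∈ rc.index, ρ a (rc.left j ⊗ₜ[k] rc.right j)
          = a * (GO.sinv hbij (rc.right j) * rc.left j) := fun j _ => hρt _ _ _
      rw [Finset.sum_congr rfl h1, ← Finset.mul_sum, GO.need1 hbij c rc,
        mul_smul_comm, mul_one]
    conv_lhs => rw [hs]
    rw [map_sum, map_sum]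
    have h2 : ∀ p ∈ s, LinearMap.lTensor X (ρ a)
        (LinearMap.lTensor X (Coalgebra.comul (R := k) (A := A)) (p.1 ⊗ₜ[k] p.2))
        = (Coalgebra.counit (R := k) (A := A) p.2 • p.1) ⊗ₜ[k] a := by
      intro p _
      rw [LinearMap.lTensor_tmul, LinearMap.lTensor_tmul, hρΔ,
        TensorProduct.tmul_smul, TensorProduct.smul_tmul']
    rw [Finset.sum_congr rfl h2, ← TensorProduct.sum_tmul]
    have h3 : (∑ p ∈ s, Coalgebra.counit (R := k) (A := A) p.2 • p.1)
        = applySnd k (Coalgebra.counit (R := k) (A := A)) (G.α x) := by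
      rw [hs, map_sum]; simp
    rw [h3, G.counit_id]
  exact LinearMap.congr_fun key u

/-- right faithfulness of `φ_X`: if `φ_X(y t) = 0` for all `y`, then `t = 0`. -/
lemma GO.phiX_faithful_right (φX : X →ₗ[k] k)
    (hφX : ∀ x : X, applySnd k G.φ (G.α x) = φX x • (1 : X))
    (t : X) (h : ∀ y : X, φX (y * t) = 0) : t = 0 := by
  classical
  have hfun : (φX ∘ₗ LinearMap.mulRight k t) = 0 := by
    apply LinearMap.ext
    intro y
    simpa using h y
  have hmain : ∀ a : A, applySnd k (G.φ ∘ₗ LinearMap.mulLeft k a) (G.α t) = 0 := by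
    intro a
    have e1 : ((1 : X) ⊗ₜ[k] a) * G.α t
        = galoisV k A X G.α (LinearMap.lTensor X (LinearMap.mulRight k t) (G.β a)) := by
      rw [← GO.V_mul_alpha, GO.V_beta]
    calc applySnd k (G.φ ∘ₗ LinearMap.mulLeft k a) (G.α t)
        = applySnd k G.φ (((1 : X) ⊗ₜ[k] a) * G.α t) :=
          (GO.applySnd_mul_one_tmul_left _ _ _).symm
      _ = applySnd k φX (LinearMap.lTensor X (LinearMap.mulRight k t) (G.β a)) := by
          rw [e1, GO.applySnd_V G φX hφX]
      _ = applySnd k (φX ∘ₗ LinearMap.mulRight k t) (G.β a) := GO.applySnd_lTensor _ _ _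
      _ = 0 := by rw [hfun]; simp [applySnd]
  set bX := Module.Basis.ofVectorSpace k X with hbX
  have hc : ∀ i, applyFst k (bX.coord i) (G.α t) = 0 := by
    intro i
    apply G.φ_faithful_right
    intro b
    have hswap := GO.swap_apply (bX.coord i) (G.φ ∘ₗ LinearMap.mulLeft k b) (G.α t)
    rw [hmain b, map_zero] at hswap
    simpa using hswap
  have h0 : G.α t = 0 := GO.sep_left bX (G.α t) hc
  apply GO.alpha_inj G (y := 0)
  rw [h0, map_zero]

end GOGalois

theorem galois_object_modular_element_formulas
    {k : Type*} [Field k] {A X : Type*} [Ring A] [HopfAlgebra k A]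
    [Ring X] [Algebra k X] [Nontrivial X]
    (G : GaloisContext k A X)
    (φX : X →ₗ[k] k)
    (hφX : ∀ x : X, applySnd k G.φ (G.α x) = φX x • (1 : X))
    (ψX : X →ₗ[k] k) (hψX_ne : ψX ≠ 0)
    (hψX : ∀ x : X, applyFst k ψX (G.α x) = ψX x • (1 : A))
    (δX : Xˣ) (hδX : ∀ x : X, φX (x * δX) = ψX x)
    (σX : X ≃ₐ[k] X) (hσX : ∀ x y : X, φX (y * σX x) = φX (x * y))
    (δ : Aˣ) (hδ : ∀ a : A, applyFst k G.φ (Coalgebra.comul a) = G.φ a • (↑δ : A))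
    (τ : k) (hτ_ne : τ ≠ 0)
    (hτ : ∀ a : A, G.φ (HopfAlgebra.antipode (R := k) (A := A)
      (HopfAlgebra.antipode (R := k) (A := A) a)) = τ * G.φ a) :
    G.α ↑δX = (↑δX : X) ⊗ₜ[k] (↑δ : A) ∧
    G.β ↑δ = (↑δX⁻¹ : X) ⊗ₜ[k] (↑δX : X) ∧
    σX ↑δX = τ⁻¹ • (↑δX : X) := by
  classical
  have L1 := GO.applyFst_phiX G φX hφX (↑δ : A) hδ
  have hψeq : (φX ∘ₗ LinearMap.mulRight k ((↑δX : X))) = ψX := by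
    apply LinearMap.ext
    intro x
    simpa using hδX x
  set T : X ⊗[k] A := G.α ↑δX - (↑δX : X) ⊗ₜ[k] (↑δ : A) with hT
  have step1 : ∀ x : X, applyFst k φX (G.α x * T) = 0 := by
    intro x
    rw [hT, mul_sub, map_sub]
    have e1 : applyFst k φX (G.α x * G.α ↑δX) = ψX x • (↑δ : A) := by
      rw [← map_mul, L1 (x * ↑δX), hδX]
    have e2 : applyFst k φX (G.α x * ((↑δX : X) ⊗ₜ[k] (↑δ : A))) = ψX x • (↑δ : A) := by
      rw [GO.applyFst_mul_tmul_right, hψeq, hψX, smul_mul_assoc, one_mul]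
    rw [e1, e2, sub_self]
  have step3 : ∀ u : X ⊗[k] A, applyFst k φX (u * T) = 0 := by
    have key : (applyFst k φX ∘ₗ LinearMap.mulRight k T) ∘ₗ GO.Gam G = 0 := by
      apply TensorProduct.ext'
      intro x a
      rw [LinearMap.comp_apply, LinearMap.comp_apply, LinearMap.mulRight_apply,
        GO.Gam_tmul, mul_assoc, GO.applyFst_mul_one_tmul_left, step1 x, mul_zero]
      rfl
    intro u
    have h0 := LinearMap.congr_fun key (GO.Lam G G.antipode_bijective u)
    rw [LinearMap.comp_apply, GO.Gam_Lam, LinearMap.comp_apply,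
      LinearMap.mulRight_apply] at h0
    simpa using h0
  have hT0 : T = 0 := by
    set bA := Module.Basis.ofVectorSpace k A with hbA
    apply GO.sep_right bA
    intro j
    apply GO.phiX_faithful_right G φX hφX
    intro y
    have h3y : applyFst k (φX ∘ₗ LinearMap.mulLeft k y) T = 0 := by
      rw [← GO.applyFst_mul_tmul_one_left]
      exact step3 _
    have hswap := GO.swap_apply (φX ∘ₗ LinearMap.mulLeft k y) (bA.coord j) T
    rw [h3y, map_zero] at hswap
    simpa using hswap.symm
  have goal1 : G.α ↑δX = (↑δX : X) ⊗ₜ[k] (↑δ : A) := by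
    have := sub_eq_zero.mp hT0
    exact this
  have hVinv : galoisV k A X G.α ((↑δX⁻¹ : X) ⊗ₜ[k] (↑δX : X)) = (1 : X) ⊗ₜ[k] (↑δ : A) := by
    rw [GO.galoisV_tmul, goal1, Algebra.TensorProduct.tmul_mul_tmul, Units.inv_mul,
      one_mul]
  have goal2 : G.β ↑δ = (↑δX⁻¹ : X) ⊗ₜ[k] (↑δX : X) := by
    have hβ : G.β ↑δ = G.V.symm ((1 : X) ⊗ₜ[k] (↑δ : A)) := rfl
    rw [hβ, LinearEquiv.symm_apply_eq]
    exact hVinv.symm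
  -- part (iii)
  have ha : ∀ z : X, applySnd k (G.φ ∘ₗ LinearMap.mulLeft k (↑δ : A)) (G.α z)
      = φX (↑δX * z) • ((↑δX⁻¹ : Xˣ) : X) := by
    intro z
    have e1 : ((1 : X) ⊗ₜ[k] (↑δ : A)) * G.α z
        = galoisV k A X G.α (LinearMap.lTensor X (LinearMap.mulRight k z) (G.β ↑δ)) := by
      rw [← GO.V_mul_alpha, GO.V_beta]
    rw [← GO.applySnd_mul_one_tmul_left, e1, GO.applySnd_V G φX hφX, goal2,
      LinearMap.lTensor_tmul, GO.applySnd_tmul, LinearMap.mulRight_apply]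
  have hb : ∀ z : X, applySnd k (G.φ ∘ₗ LinearMap.mulRight k (↑δ : A)) (G.α z)
      = ψX z • ((↑δX⁻¹ : Xˣ) : X) := by
    intro z
    have e0 : (1 : X) ⊗ₜ[k] (↑δ : A) = G.α ↑δX * (((↑δX⁻¹ : Xˣ) : X) ⊗ₜ[k] (1 : A)) := by
      rw [goal1, Algebra.TensorProduct.tmul_mul_tmul, Units.mul_inv, mul_one]
    rw [← GO.applySnd_mul_one_tmul_right, e0, ← mul_assoc, ← map_mul,
      GO.applySnd_mul_tmul_one_right, hφX, hδX, smul_mul_assoc, one_mul]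
  have hF1 : ∀ c : A, G.φ (c * ↑δ) = τ * G.φ (↑δ * c) :=
    GO.tau_comm G.φ (↑δ : A) G.antipode_bijective G.φ_integral hδ G.φ_faithful_left
      G.φ_faithful_right τ hτ
  have hδXne : ((↑δX⁻¹ : Xˣ) : X) ≠ 0 := Units.ne_zero _
  have hstar : ∀ z : X, ψX z = τ * φX (↑δX * z) := by
    intro z
    have hfun : (G.φ ∘ₗ LinearMap.mulRight k ((↑δ : A)))
        = τ • (G.φ ∘ₗ LinearMap.mulLeft k ((↑δ : A))) := by
      apply LinearMap.ext
      intro c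
      simpa using hF1 c
    have h1 : applySnd k (G.φ ∘ₗ LinearMap.mulRight k ((↑δ : A))) (G.α z)
        = τ • applySnd k (G.φ ∘ₗ LinearMap.mulLeft k ((↑δ : A))) (G.α z) := by
      rw [hfun, GO.applySnd_smul]
    rw [ha z, hb z, smul_smul] at h1
    exact smul_left_injective k hδXne h1
  have goal3 : σX ↑δX = τ⁻¹ • (↑δX : X) := by
    have hz : ∀ y : X, φX (y * (σX ↑δX - τ⁻¹ • (↑δX : X))) = 0 := by
      intro y
      rw [mul_sub, map_sub, hσX, mul_smul_comm, map_smul, hδX, hstar y, smul_eq_mul,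
        ← mul_assoc, inv_mul_cancel₀ hτ_ne, one_mul, sub_self]
    have := GO.phiX_faithful_right G φX hφX _ hz
    exact sub_eq_zero.mp this
  exact ⟨goal1, goal2, goal3⟩
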